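/- Prefix frequency of represented strings (intermediate claim in the proof of Theorem 3.1(iii)): for any strings T, w over the alphabet A, if w is represented in T and 1 ≤ ℓ ≤ |w|, then the prefix w[1..ℓ] occurs in T at least |w| − ℓ + 1 times (i.e., at |w| − ℓ + 1 distinct starting positions). -/

import Mathlib

/-- `w` occurs in `T` at the (1-indexed) position `p`, i.e. `1 ≤ p ≤ |T| - |w| + 1`
and `T[p..p+|w|-1] = w`. -/
def OccursAt {A : Type*} (T w : List A) (p : ℕ) : Prop :=
  1 ≤ p ∧ p + w.length ≤ T.length + 1 ∧ (T.drop (p - 1)).take w.length = w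

/-- `w` is represented in `T`: there are positions `p 1 < p 2 < ... < p |w|` such that
for each `1 ≤ ℓ ≤ |w|`, the prefix `w[1..ℓ]` occurs in `T` at position `p ℓ`. -/
def Represented {A : Type*} (T w : List A) : Prop :=
  ∃ p : ℕ → ℕ,
    (∀ i j, 1 ≤ i → i < j → j ≤ w.length → p i < p j) ∧
    (∀ ℓ, 1 ≤ ℓ → ℓ ≤ w.length → OccursAt T (w.take ℓ) (p ℓ))

lemma occursAt_prefix {A : Type*} (T u v : List A) (p : ℕ) (h : OccursAt T u p)
    (hpre : v <+: u) : OccursAt T v p := by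
  obtain ⟨h1, h2, h3⟩ := h
  obtain ⟨t, rfl⟩ := hpre
  refine ⟨h1, ?_, ?_⟩
  · calc p + v.length ≤ p + (v ++ t).length := by simp
      _ ≤ T.length + 1 := h2
  · have := congrArg (List.take v.length) h3
    simpa [List.take_take, List.take_append] using this

/-- Prefix frequency of represented strings (intermediate claim in the proof of
Theorem 3.1(iii)): if `w` is represented in `T` and `1 ≤ ℓ ≤ |w|`, then the prefix
`w[1..ℓ]` occurs in `T` at at least `|w| - ℓ + 1` distinct starting positions. -/
theorem prefix_frequency {A : Type*} (T w : List A) (hw : Represented T w)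
    (ℓ : ℕ) (h1 : 1 ≤ ℓ) (h2 : ℓ ≤ w.length) :
    w.length - ℓ + 1 ≤ {p : ℕ | OccursAt T (w.take ℓ) p}.ncard := by
  obtain ⟨p, hmono, hocc⟩ := hw
  set S := {p : ℕ | OccursAt T (w.take ℓ) p}
  have hmem : ∀ m ∈ Finset.Icc ℓ w.length, p m ∈ S := by
    intro m hm
    rw [Finset.mem_Icc] at hm
    have := hocc m (le_trans h1 hm.1) hm.2
    exact occursAt_prefix T (w.take m) (w.take ℓ) (p m) this
      (List.prefix_of_prefix_length_le (List.take_prefix _ _) (List.take_prefix _ _)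
        (by simp; omega))
  have hsub : ↑((Finset.Icc ℓ w.length).image p) ⊆ S := by
    intro x hx
    simp only [Finset.coe_image, Set.mem_image, Finset.mem_coe] at hx
    obtain ⟨m, hm, rfl⟩ := hx
    exact hmem m hm
  have hfin : S.Finite := by
    apply Set.Finite.subset (Set.finite_Iic (T.length + 1))
    intro x hx
    obtain ⟨hx1, hx2, _⟩ := hx
    exact Set.mem_Iic.mpr (le_trans (Nat.le_add_right _ _) hx2)
  have hinj : Set.InjOn p (Finset.Icc ℓ w.length) := by
    intro a ha b hb hab
    simp only [Finset.coe_Icc, Set.mem_Icc] at ha hb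
    by_contra hne
    rcases lt_or_gt_of_ne hne with h | h
    · exact absurd hab (ne_of_lt (hmono a b (le_trans h1 ha.1) h hb.2))
    · exact absurd hab.symm (ne_of_lt (hmono b a (le_trans h1 hb.1) h ha.2))
  have hcard : ((Finset.Icc ℓ w.length).image p).card = w.length - ℓ + 1 := by
    rw [Finset.card_image_of_injOn (by simpa using hinj), Nat.card_Icc]
    omega
  calc w.length - ℓ + 1 = ((Finset.Icc ℓ w.length).image p : Set ℕ).ncard := by
        rw [Set.ncard_coe_finset, hcard]
    _ ≤ S.ncard := Set.ncard_le_ncard hsub hfin
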